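/- arXiv:1111.0432 — 3 statements merged into one kernel-verified Lean document; each statement's English description precedes it below -/
import Mathlib

section
/- Let φ : ℝⁿ → ℝᵈ be a map, ℓ : ℝ → ℝ a convex function, λ > 0, and (t_i, y_i), i = 1..m, data pairs. Define Ψ ∈ ℝ^{m×m} by Ψ_{ij} = ⟨φ(t_i), φ(t_j)⟩. If (α, b) ∈ ℝᵐ × ℝ minimizes F₂(α,b) = (λ/2) αᵀΨα + (1/m) Σ_i ℓ(y_i (Ψ_{i·} α + b)), then with w = Σ_i α_i φ(t_i), the pair (w, b) minimizes F₁(w,b) = (λ/2) wᵀw + (1/m) Σ_i ℓ(y_i (⟨w, φ(t_i)⟩ + b)). -/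
open Matrix Finset

lemma sum_smul_dot {m d : ℕ} (α : Fin m → ℝ) (v : Fin m → Fin d → ℝ) (u : Fin d → ℝ) :
    (∑ i, α i • v i) ⬝ᵥ u = ∑ i, α i * (v i ⬝ᵥ u) := by
  simp [dotProduct, Finset.sum_apply, Finset.sum_mul, Finset.mul_sum, mul_assoc]
  rw [Finset.sum_comm]

lemma inner_eq_dot {d : ℕ} (x y : EuclideanSpace ℝ (Fin d)) :
    inner ℝ x y = (x : Fin d → ℝ) ⬝ᵥ (y : Fin d → ℝ) := by
  simp [PiLp.inner_apply, dotProduct, mul_comm]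

/-- Representer-theorem style result: a minimizer of the kernelized problem (P2)
yields a minimizer of the primal problem (P1) via w = Σ α_i φ(t_i). -/
theorem p2_minimizer_gives_p1_minimizer
    (n d m : ℕ) (φ : (Fin n → ℝ) → (Fin d → ℝ))
    (ℓ : ℝ → ℝ) (hℓ : ConvexOn ℝ Set.univ ℓ)
    (lam : ℝ) (hlam : 0 < lam)
    (t : Fin m → (Fin n → ℝ)) (y : Fin m → ℝ)
    (Ψ : Matrix (Fin m) (Fin m) ℝ)
    (hΨ : ∀ i j, Ψ i j = φ (t i) ⬝ᵥ φ (t j))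
    (F₂ : (Fin m → ℝ) → ℝ → ℝ)
    (hF₂ : ∀ α b, F₂ α b =
      lam / 2 * (α ⬝ᵥ Ψ.mulVec α) +
      (1 / (m : ℝ)) * ∑ i, ℓ (y i * (Ψ.mulVec α i + b)))
    (F₁ : (Fin d → ℝ) → ℝ → ℝ)
    (hF₁ : ∀ w b, F₁ w b =
      lam / 2 * (w ⬝ᵥ w) +
      (1 / (m : ℝ)) * ∑ i, ℓ (y i * (w ⬝ᵥ φ (t i) + b)))
    (α : Fin m → ℝ) (b : ℝ)
    (hmin : ∀ α' b', F₂ α b ≤ F₂ α' b') :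
    ∀ w' b', F₁ (∑ i, α i • φ (t i)) b ≤ F₁ w' b' := by
  -- key computations for any coefficient vector β
  have hdot : ∀ (β : Fin m → ℝ) (i : Fin m),
      (∑ j, β j • φ (t j)) ⬝ᵥ φ (t i) = Ψ.mulVec β i := by
    intro β i
    rw [sum_smul_dot]
    simp [Matrix.mulVec, dotProduct, hΨ, mul_comm]
  have hquad : ∀ (β : Fin m → ℝ),
      (∑ j, β j • φ (t j)) ⬝ᵥ (∑ j, β j • φ (t j)) = β ⬝ᵥ Ψ.mulVec β := by
    intro β
    rw [sum_smul_dot]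
    conv_rhs => rw [dotProduct]
    refine Finset.sum_congr rfl fun i _ => ?_
    rw [dotProduct_comm, hdot]
  have hEq : ∀ (β : Fin m → ℝ) (c : ℝ), F₁ (∑ j, β j • φ (t j)) c = F₂ β c := by
    intro β c
    rw [hF₁, hF₂, hquad]
    congr 1
    congr 1
    refine Finset.sum_congr rfl fun i _ => ?_
    rw [hdot]
  intro w' b'
  rw [hEq]
  -- decompose w' using orthogonal projection onto the span of the φ (t j)
  set K : Submodule ℝ (EuclideanSpace ℝ (Fin d)) :=
    Submodule.span ℝ (Set.range fun j => WithLp.toLp 2 (φ (t j))) with hK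
  have : FiniteDimensional ℝ K := by
    apply FiniteDimensional.span_of_finite
    exact Set.finite_range _
  set w'' : EuclideanSpace ℝ (Fin d) := WithLp.toLp 2 w' with hw''
  set u : EuclideanSpace ℝ (Fin d) := ((K.orthogonalProjection w'' : K) : EuclideanSpace ℝ (Fin d)) with hu
  have huK : u ∈ K := (K.orthogonalProjection w'').2
  obtain ⟨β, hβ⟩ := (Submodule.mem_span_range_iff_exists_fun ℝ).1 huK
  have hperp : ∀ v ∈ K, inner ℝ (w'' - u) v = (0 : ℝ) := by
    intro v hv
    exact K.starProjection_inner_eq_zero w'' v hv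
  -- loss terms agree
  have hdots : ∀ i, w' ⬝ᵥ φ (t i) = Ψ.mulVec β i := by
    intro i
    have hmem : WithLp.toLp 2 (φ (t i)) ∈ K :=
      Submodule.subset_span ⟨i, rfl⟩
    have h0 := hperp _ hmem
    rw [inner_eq_dot] at h0
    have : (w'' : Fin d → ℝ) ⬝ᵥ φ (t i) = (u : Fin d → ℝ) ⬝ᵥ φ (t i) := by
      have := sub_dotProduct (w'' : Fin d → ℝ) (u : Fin d → ℝ) (φ (t i))
      rw [show ((w'' - u : EuclideanSpace ℝ (Fin d)) : Fin d → ℝ)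
          = (w'' : Fin d → ℝ) - (u : Fin d → ℝ) from rfl] at h0
      rw [this] at h0
      linarith [h0]
    rw [show w' = (w'' : Fin d → ℝ) from rfl, this, ← hdot β i, ← hβ]
    simp [WithLp.ofLp_sum]
  -- quadratic term inequality
  have hquad' : β ⬝ᵥ Ψ.mulVec β ≤ w' ⬝ᵥ w' := by
    rw [← hquad β]
    have hβ' : (∑ j, β j • φ (t j)) = (u : Fin d → ℝ) := by
      rw [← hβ]
      simp [WithLp.ofLp_sum]
    rw [hβ']
    have hpyth : ‖u‖ ^ 2 + ‖w'' - u‖ ^ 2 = ‖w''‖ ^ 2 := by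
      have h0 : inner ℝ u (w'' - u) = (0 : ℝ) := by
        rw [real_inner_comm]
        exact hperp u huK
      have := norm_add_sq_real u (w'' - u)
      simp [h0] at this
      linarith [this]
    have h1 : (u : Fin d → ℝ) ⬝ᵥ (u : Fin d → ℝ) = ‖u‖ ^ 2 := by
      rw [← inner_eq_dot, real_inner_self_eq_norm_sq]
    have h2 : w' ⬝ᵥ w' = ‖w''‖ ^ 2 := by
      rw [show w' = (w'' : Fin d → ℝ) from rfl, ← inner_eq_dot, real_inner_self_eq_norm_sq]
    rw [h1, h2, ← hpyth]
    nlinarith [sq_nonneg ‖w'' - u‖]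
  calc F₂ α b ≤ F₂ β b' := hmin β b'
    _ ≤ F₁ w' b' := by
        rw [hF₂, hF₁]
        have hl : (∑ i, ℓ (y i * (Ψ.mulVec β i + b'))) = ∑ i, ℓ (y i * (w' ⬝ᵥ φ (t i) + b')) := by
          refine Finset.sum_congr rfl fun i _ => ?_
          rw [hdots i]
        rw [hl]
        have : lam / 2 * (β ⬝ᵥ Ψ.mulVec β) ≤ lam / 2 * (w' ⬝ᵥ w') := by
          apply mul_le_mul_of_nonneg_left hquad' (by linarith)
        linarith
end

section
/- Let f be convex on a closed convex set X containing a minimizer x*, let x⁰,…,x^N ∈ X, η₁,…,η_N > 0, and suppose for each j that ⟨g^j, x^{j-1} - x*⟩ ≤ (1/(2η_j))(‖x^{j-1}-x*‖² - ‖x^j - x*‖²) + (η_j/2) D_G² where g^j ∈ ∂f(x^{j-1}) and ‖x - x*‖ ≤ 2D_X on X. Then, for 1 ≤ N̄ ≤ N, the weighted average x̃ = (Σ_{t=N̄}^N η_t x^{t-1}) / (Σ_{t=N̄}^N η_t) satisfies f(x̃) - f(x*) ≤ (2D_X² + (D_G²/2) Σ_{t=N̄}^N η_t²) / (Σ_{t=N̄}^N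 η_t). -/
open scoped RealInnerProductSpace
open Finset

lemma tele_sum (a : ℕ → ℝ) (m n : ℕ) (hm : 1 ≤ m) (h : m ≤ n) :
    ∑ t ∈ Finset.Icc m n, (a (t - 1) - a t) = a (m - 1) - a n := by
  induction n, h using Nat.le_induction with
  | base => simp
  | succ n hmn ih =>
    rw [Finset.sum_Icc_succ_top (by omega), ih]
    simp

/-- Deterministic skeleton of the robust stochastic approximation bound: from the
per-iteration inequalities, the weighted average of the iterates x^{N̄-1},…,x^{N-1}
satisfies the O(ΣηΔ) suboptimality bound. -/
theorem robust_sa_weighted_average_bound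
    (d : ℕ) (X : Set (EuclideanSpace ℝ (Fin d))) (hXc : IsClosed X) (hX : Convex ℝ X)
    (f : EuclideanSpace ℝ (Fin d) → ℝ) (hf : ConvexOn ℝ X f)
    (xstar : EuclideanSpace ℝ (Fin d)) (hxstar : xstar ∈ X)
    (hmin : ∀ x ∈ X, f xstar ≤ f x)
    (N Nbar : ℕ) (hNbar : 1 ≤ Nbar) (hN : Nbar ≤ N)
    (x : ℕ → EuclideanSpace ℝ (Fin d)) (hxX : ∀ j, x j ∈ X)
    (η : ℕ → ℝ) (hη : ∀ j, 0 < η j)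
    (DX DG : ℝ) (hDX : ∀ x' ∈ X, ‖x' - xstar‖ ≤ 2 * DX)
    (g : ℕ → EuclideanSpace ℝ (Fin d))
    (hg : ∀ j, 1 ≤ j → j ≤ N → ∀ z ∈ X, f z ≥ f (x (j - 1)) + ⟪g j, z - x (j - 1)⟫)
    (hiter : ∀ j, 1 ≤ j → j ≤ N →
      ⟪g j, x (j - 1) - xstar⟫ ≤
        (1 / (2 * η j)) * (‖x (j - 1) - xstar‖ ^ 2 - ‖x j - xstar‖ ^ 2) +
        (η j / 2) * DG ^ 2) :
    f ((∑ t ∈ Finset.Icc Nbar N, η t)⁻¹ • ∑ t ∈ Finset.Icc Nbar N, η t • x (t - 1))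
      - f xstar ≤
    (2 * DX ^ 2 + DG ^ 2 / 2 * ∑ t ∈ Finset.Icc Nbar N, η t ^ 2) /
      (∑ t ∈ Finset.Icc Nbar N, η t) := by
  set S : ℝ := ∑ t ∈ Finset.Icc Nbar N, η t with hS
  have hne : (Finset.Icc Nbar N).Nonempty := Finset.nonempty_Icc.2 hN
  have hSpos : 0 < S := Finset.sum_pos (fun t _ => hη t) hne
  -- Jensen
  have hw0 : ∀ t ∈ Finset.Icc Nbar N, 0 ≤ η t / S := fun t _ =>
    div_nonneg (hη t).le hSpos.le
  have hw1 : ∑ t ∈ Finset.Icc Nbar N, η t / S = 1 := by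
    rw [← Finset.sum_div, ← hS, div_self hSpos.ne']
  have hrw : S⁻¹ • ∑ t ∈ Finset.Icc Nbar N, η t • x (t - 1)
      = ∑ t ∈ Finset.Icc Nbar N, (η t / S) • x (t - 1) := by
    rw [Finset.smul_sum]
    refine Finset.sum_congr rfl fun t _ => ?_
    rw [smul_smul]
    congr 1
    field_simp
  have hjensen : f (S⁻¹ • ∑ t ∈ Finset.Icc Nbar N, η t • x (t - 1))
      ≤ ∑ t ∈ Finset.Icc Nbar N, (η t / S) * f (x (t - 1)) := by
    rw [hrw]
    exact hf.map_sum_le hw0 hw1 (fun t _ => hxX (t - 1))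
  -- per-term bound
  have hterm : ∀ t ∈ Finset.Icc Nbar N,
      η t * (f (x (t - 1)) - f xstar)
        ≤ (1 / 2) * (‖x (t - 1) - xstar‖ ^ 2 - ‖x t - xstar‖ ^ 2)
          + η t ^ 2 / 2 * DG ^ 2 := by
    intro t ht
    rw [Finset.mem_Icc] at ht
    have h1 : 1 ≤ t := le_trans hNbar ht.1
    have hgt := hg t h1 ht.2 xstar hxstar
    have hsub : f (x (t - 1)) - f xstar ≤ ⟪g t, x (t - 1) - xstar⟫ := by
      have : ⟪g t, xstar - x (t - 1)⟫ = -⟪g t, x (t - 1) - xstar⟫ := by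
        rw [← inner_neg_right]; congr 1; abel
      linarith [hgt, this ▸ hgt]
    have hit := hiter t h1 ht.2
    have hηt := hη t
    calc η t * (f (x (t - 1)) - f xstar)
        ≤ η t * ⟪g t, x (t - 1) - xstar⟫ := by
          exact mul_le_mul_of_nonneg_left hsub hηt.le
      _ ≤ η t * ((1 / (2 * η t)) * (‖x (t - 1) - xstar‖ ^ 2 - ‖x t - xstar‖ ^ 2)
            + (η t / 2) * DG ^ 2) := mul_le_mul_of_nonneg_left hit hηt.le
      _ = (1 / 2) * (‖x (t - 1) - xstar‖ ^ 2 - ‖x t - xstar‖ ^ 2)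
            + η t ^ 2 / 2 * DG ^ 2 := by
          field_simp
  -- sum the bounds
  have hsum : ∑ t ∈ Finset.Icc Nbar N, η t * (f (x (t - 1)) - f xstar)
      ≤ 2 * DX ^ 2 + DG ^ 2 / 2 * ∑ t ∈ Finset.Icc Nbar N, η t ^ 2 := by
    have h1 := Finset.sum_le_sum hterm
    rw [Finset.sum_add_distrib, ← Finset.mul_sum,
      tele_sum (fun t => ‖x t - xstar‖ ^ 2) Nbar N hNbar hN] at h1
    have hbound : ‖x (Nbar - 1) - xstar‖ ^ 2 ≤ (2 * DX) ^ 2 := by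
      have := hDX (x (Nbar - 1)) (hxX _)
      nlinarith [norm_nonneg (x (Nbar - 1) - xstar)]
    have hN0 : (0:ℝ) ≤ ‖x N - xstar‖ ^ 2 := sq_nonneg _
    have heq : ∑ t ∈ Finset.Icc Nbar N, η t ^ 2 / 2 * DG ^ 2
        = DG ^ 2 / 2 * ∑ t ∈ Finset.Icc Nbar N, η t ^ 2 := by
      rw [Finset.mul_sum]; exact Finset.sum_congr rfl fun t _ => by ring
    rw [heq] at h1
    nlinarith
  -- combine
  have hfinal : f (S⁻¹ • ∑ t ∈ Finset.Icc Nbar N, η t • x (t - 1)) - f xstar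
      ≤ (∑ t ∈ Finset.Icc Nbar N, η t * (f (x (t - 1)) - f xstar)) / S := by
    have e1 : ∑ t ∈ Finset.Icc Nbar N, (η t / S) * f (x (t - 1))
        = (∑ t ∈ Finset.Icc Nbar N, η t * f (x (t - 1))) / S := by
      rw [Finset.sum_div]
      exact Finset.sum_congr rfl fun t _ => by ring
    have e2 : ∑ t ∈ Finset.Icc Nbar N, η t * (f (x (t - 1)) - f xstar)
        = (∑ t ∈ Finset.Icc Nbar N, η t * f (x (t - 1))) - S * f xstar := by
      rw [hS, Finset.sum_mul, ← Finset.sum_sub_distrib]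
      exact Finset.sum_congr rfl fun t _ => by ring
    rw [e2]
    have : (∑ t ∈ Finset.Icc Nbar N, η t * f (x (t - 1)) - S * f xstar) / S
        = (∑ t ∈ Finset.Icc Nbar N, η t * f (x (t - 1))) / S - f xstar := by
      field_simp
    rw [this, ← e1]
    linarith [hjensen]
  calc f (S⁻¹ • ∑ t ∈ Finset.Icc Nbar N, η t • x (t - 1)) - f xstar
      ≤ (∑ t ∈ Finset.Icc Nbar N, η t * (f (x (t - 1)) - f xstar)) / S := hfinal
    _ ≤ (2 * DX ^ 2 + DG ^ 2 / 2 * ∑ t ∈ Finset.Icc Nbar N, η t ^ 2) / S := by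
        gcongr
end

section
/- Let p(ν) = (4πσ)^{-n/2} exp(-‖ν‖²/(4σ)) be the density of the Gaussian distribution N(0, 2σ I_n) on ℝⁿ, let ω be uniform on [0, 2π] independent of ν, and define z(t) = √2 cos(νᵀt + ω). Then for all s, t ∈ ℝⁿ, E[z(s) z(t)] = exp(-σ‖s - t‖²), the Gaussian kernel value. -/
open scoped RealInnerProductSpace
open Real MeasureTheory

lemma rff_inner_integral (a b : ℝ) :
    ∫ ω in (0:ℝ)..(2*π),
      (Real.sqrt 2 * Real.cos (a + ω)) * (Real.sqrt 2 * Real.cos (b + ω)) / (2*π)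
      = Real.cos (a - b) := by
  have h2 : Real.sqrt 2 * Real.sqrt 2 = 2 := Real.mul_self_sqrt (by norm_num)
  have key : ∀ ω : ℝ,
      (Real.sqrt 2 * Real.cos (a + ω)) * (Real.sqrt 2 * Real.cos (b + ω)) / (2*π)
      = (Real.cos (a - b) + Real.cos (2*ω + (a+b))) / (2*π) := by
    intro ω
    have e1 : Real.cos (a - b)
        = Real.cos (a+ω) * Real.cos (b+ω) + Real.sin (a+ω) * Real.sin (b+ω) := by
      rw [show a - b = (a+ω) - (b+ω) by ring, Real.cos_sub]
    have e2 : Real.cos (2*ω + (a+b))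
        = Real.cos (a+ω) * Real.cos (b+ω) - Real.sin (a+ω) * Real.sin (b+ω) := by
      rw [show 2*ω + (a+b) = (a+ω) + (b+ω) by ring, Real.cos_add]
    rw [e1, e2]
    congr 1
    linear_combination (Real.cos (a+ω) * Real.cos (b+ω)) * h2
  simp_rw [key]
  have hi1 : IntervalIntegrable (fun _ : ℝ => Real.cos (a-b)) volume 0 (2*π) :=
    intervalIntegrable_const
  have hi2 : IntervalIntegrable (fun ω : ℝ => Real.cos (2*ω + (a+b))) volume 0 (2*π) :=
    (Real.continuous_cos.comp (by continuity)).intervalIntegrable _ _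
  rw [intervalIntegral.integral_div, intervalIntegral.integral_add hi1 hi2]
  have hz : (∫ ω in (0:ℝ)..(2*π), Real.cos (2*ω + (a+b))) = 0 := by
    rw [intervalIntegral.integral_comp_mul_add Real.cos (by norm_num : (2:ℝ) ≠ 0) (a+b),
      integral_cos]
    have hs : Real.sin (2*(2*π) + (a+b)) = Real.sin (2*0 + (a+b)) := by
      rw [show 2*(2*π)+(a+b) = ((2*0+(a+b)) + 2*π) + 2*π by ring, Real.sin_add_two_pi,
        Real.sin_add_two_pi]
    rw [hs]
    simp
  rw [hz, intervalIntegral.integral_const]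
  have hπ : π ≠ 0 := Real.pi_ne_zero
  field_simp
  simp

lemma rff_gauss (n : ℕ) {σ : ℝ} (hσ : 0 < σ) (w : EuclideanSpace ℝ (Fin n)) :
    ∫ ν : EuclideanSpace ℝ (Fin n), Real.cos ⟪w, ν⟫ * Real.exp (-‖ν‖^2 / (4*σ))
      = (4*π*σ) ^ ((n:ℝ)/2) * Real.exp (-σ * ‖w‖^2) := by
  set b : ℂ := ((1/(4*σ) : ℝ) : ℂ) with hbdef
  have hb : 0 < b.re := by simp [hbdef]; positivity
  have key := GaussianFourier.integral_cexp_neg_mul_sq_norm_add (V := EuclideanSpace ℝ (Fin n)) hb Complex.I w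
  have hint := GaussianFourier.integrable_cexp_neg_mul_sq_norm_add (V := EuclideanSpace ℝ (Fin n)) hb Complex.I w
  have hL := integral_re hint
  simp only [RCLike.re_to_complex] at hL
  have hre := congrArg Complex.re key
  rw [← hL] at hre
  have hπσ : (0:ℝ) < 4*π*σ := by positivity
  -- compute pointwise real part
  have hpt : ∀ ν : EuclideanSpace ℝ (Fin n),
      (Complex.exp (-b * (‖ν‖:ℂ)^2 + Complex.I * (⟪w, ν⟫ : ℝ))).re
        = Real.cos ⟪w, ν⟫ * Real.exp (-‖ν‖^2 / (4*σ)) := by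
    intro ν
    have hz : (-b * ((‖ν‖:ℝ):ℂ)^2 + Complex.I * ((⟪w, ν⟫ : ℝ) : ℂ))
        = Complex.ofReal (-‖ν‖^2/(4*σ)) + Complex.ofReal (⟪w, ν⟫) * Complex.I := by
      rw [hbdef]; push_cast; ring
    rw [hz, Complex.exp_re]
    simp only [Complex.add_re, Complex.add_im, Complex.ofReal_re, Complex.ofReal_im,
      Complex.mul_I_re, Complex.mul_I_im, neg_zero, zero_add, add_zero]
    ring
  simp_rw [hpt] at hre
  rw [hre]
  -- compute RHS real part
  have hrank : (Module.finrank ℝ (EuclideanSpace ℝ (Fin n)) : ℂ) = (n : ℂ) := by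
    simp [finrank_euclideanSpace_fin]
  have h1 : (↑π / b : ℂ) = ((4*π*σ : ℝ) : ℂ) := by
    rw [hbdef]
    push_cast
    field_simp
  have h2 : ((↑π / b) ^ ((Module.finrank ℝ (EuclideanSpace ℝ (Fin n)) : ℂ) / 2) : ℂ)
      = (((4*π*σ) ^ ((n:ℝ)/2) : ℝ) : ℂ) := by
    rw [h1, hrank, Complex.ofReal_cpow hπσ.le]
    norm_num
  have h3 : Complex.exp (Complex.I ^ 2 * (‖w‖:ℂ)^2 / (4*b)) = ((Real.exp (-σ*‖w‖^2) : ℝ) : ℂ) := by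
    have hσ' : (σ : ℂ) ≠ 0 := by exact_mod_cast hσ.ne'
    have harg : (-1 : ℂ) * ((‖w‖:ℝ):ℂ)^2 / (4*b) = ((-σ*‖w‖^2 : ℝ) : ℂ) := by
      rw [hbdef]; push_cast; field_simp
    rw [Complex.I_sq, harg, ← Complex.ofReal_exp]
  rw [h2, h3, ← Complex.ofReal_mul, Complex.ofReal_re]

/-- Random Fourier features: with ν Gaussian N(0, 2σI) on ℝⁿ (density
p(ν) = (4πσ)^{-n/2} exp(-‖ν‖²/(4σ))) and ω uniform on [0, 2π] independent of ν,
the features z(t) = √2 cos(νᵀt + ω) satisfy E[z(s)z(t)] = exp(-σ‖s-t‖²). -/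
theorem random_fourier_features_unbiased
    (n : ℕ) (σ : ℝ) (hσ : 0 < σ) (s t : EuclideanSpace ℝ (Fin n)) :
    ∫ ν : EuclideanSpace ℝ (Fin n),
      (∫ ω in (0 : ℝ)..(2 * π),
        (Real.sqrt 2 * Real.cos (⟪ν, s⟫ + ω)) *
          (Real.sqrt 2 * Real.cos (⟪ν, t⟫ + ω)) / (2 * π)) *
      ((4 * π * σ) ^ (-(n : ℝ) / 2) * Real.exp (-‖ν‖ ^ 2 / (4 * σ)))
      = Real.exp (-σ * ‖s - t‖ ^ 2) := by
  have key : ∀ ν : EuclideanSpace ℝ (Fin n),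
      (∫ ω in (0 : ℝ)..(2 * π),
        (Real.sqrt 2 * Real.cos (⟪ν, s⟫ + ω)) *
          (Real.sqrt 2 * Real.cos (⟪ν, t⟫ + ω)) / (2 * π)) *
      ((4 * π * σ) ^ (-(n : ℝ) / 2) * Real.exp (-‖ν‖ ^ 2 / (4 * σ)))
      = (4 * π * σ) ^ (-(n : ℝ) / 2) *
          (Real.cos ⟪s - t, ν⟫ * Real.exp (-‖ν‖ ^ 2 / (4 * σ))) := by
    intro ν
    rw [rff_inner_integral]
    have : ⟪ν, s⟫ - ⟪ν, t⟫ = ⟪s - t, ν⟫ := by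
      rw [← inner_sub_right, real_inner_comm]
    rw [this]
    ring
  simp_rw [key]
  rw [integral_const_mul, rff_gauss n hσ (s - t), ← mul_assoc,
    ← Real.rpow_add (by positivity : (0:ℝ) < 4 * π * σ),
    show (-(n:ℝ)/2 + (n:ℝ)/2) = 0 by ring, Real.rpow_zero, one_mul]
end
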